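/- If φ is a homogeneous quasimorphism on G and g is a product of n commutators, then |φ(g)| ≤ (2n − 1)·D(φ). In particular |φ(g)| ≤ 2·cl(g)·D(φ) for g ∈ [G,G]. -/

import Mathlib

open Filter
open scoped commutatorElement

/-- The set of `n` such that `g` is a product of `n` commutators. -/
def clSet {G : Type*} [Group G] (g : G) : Set ℕ :=
  {n | ∃ a b : Fin n → G, g = (List.ofFn fun i => ⁅a i, b i⁆).prod}

/-- Commutator length: the least number of commutators whose product is `g`. -/
noncomputable def cl {G : Type*} [Group G] (g : G) : ℕ := sInf (clSet g)

/-- Stable commutator length, defined (via Fekete's lemma) as the infimum of `cl (g^n) / n`. -/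
noncomputable def scl {G : Type*} [Group G] (g : G) : ℝ :=
  ⨅ n : ℕ+, (cl (g ^ (n : ℕ)) : ℝ) / (n : ℝ)

lemma clSet_nonempty_iff_list {G : Type*} [Group G] (g : G) :
    (clSet g).Nonempty ↔ ∃ l : List (G × G), g = (l.map fun p => ⁅p.1, p.2⁆).prod := by
  constructor
  · rintro ⟨n, a, b, hg⟩
    refine ⟨List.ofFn (fun i => (a i, b i)), ?_⟩
    rw [List.map_ofFn]
    exact hg
  · rintro ⟨l, hg⟩
    refine ⟨l.length, fun i => (l.get i).1, fun i => (l.get i).2, ?_⟩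
    rw [hg]
    exact congrArg List.prod (List.ofFn_getElem_eq_map l (fun p => ⁅p.1, p.2⁆)).symm

lemma clSet_nonempty_of_mem_commutator {G : Type*} [Group G] (g : G)
    (hg : g ∈ commutator G) : (clSet g).Nonempty := by
  rw [clSet_nonempty_iff_list]
  rw [commutator_eq_closure] at hg
  induction hg using Subgroup.closure_induction with
  | mem x hx =>
    obtain ⟨a, b, rfl⟩ := hx
    exact ⟨[(a, b)], by simp⟩
  | one => exact ⟨[], by simp⟩
  | mul x y _ _ hx hy =>
    obtain ⟨l, rfl⟩ := hx
    obtain ⟨m, rfl⟩ := hy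
    exact ⟨l ++ m, by simp⟩
  | inv x _ hx =>
    obtain ⟨l, rfl⟩ := hx
    refine ⟨(l.map (fun p => (p.2, p.1))).reverse, ?_⟩
    rw [List.prod_inv_reverse]
    simp [List.map_reverse, Function.comp_def]

theorem stmt_11 {G : Type*} [Group G] (φ : G → ℝ) (D : ℝ)
    (hqm : ∀ g h : G, |φ g + φ h - φ (g * h)| ≤ D)
    (hhom : ∀ (g : G) (n : ℤ), φ (g ^ n) = n * φ g) :
    (∀ (n : ℕ), 1 ≤ n → ∀ a b : Fin n → G,
      |φ (List.ofFn fun i => ⁅a i, b i⁆).prod| ≤ (2 * (n : ℝ) - 1) * D) ∧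
    (∀ g : G, g ∈ commutator G → |φ g| ≤ 2 * (cl g : ℝ) * D) := by
  have hone : φ 1 = 0 := by
    have := hhom 1 0
    simpa using this
  have hD : 0 ≤ D := by
    have := hqm 1 1
    simp [hone] at this
    linarith [abs_nonneg (φ 1), hqm 1 1]
  have hinv : ∀ g : G, φ g⁻¹ = - φ g := by
    intro g
    have := hhom g (-1)
    simpa using this
  -- conjugation invariance
  have hconj : ∀ g h : G, φ (h * g * h⁻¹) = φ g := by
    intro g h
    by_contra hne
    have hpos : 0 < |φ (h * g * h⁻¹) - φ g| := abs_pos.mpr (sub_ne_zero.mpr hne)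
    obtain ⟨n, hn⟩ := exists_nat_gt ((2 * D) / |φ (h * g * h⁻¹) - φ g|)
    have hn' : 2 * D < n * |φ (h * g * h⁻¹) - φ g| := by
      rw [div_lt_iff₀ hpos] at hn
      linarith
    have key : (n : ℝ) * |φ (h * g * h⁻¹) - φ g| ≤ 2 * D := by
      have hpow : (h * g * h⁻¹) ^ (n : ℤ) = h * g ^ (n : ℤ) * h⁻¹ := by
        rw [conj_zpow]
      have e1 : |φ h + φ (g ^ (n : ℤ)) - φ (h * g ^ (n : ℤ))| ≤ D := hqm _ _
      have e2 : |φ (h * g ^ (n : ℤ)) + φ h⁻¹ - φ (h * g ^ (n : ℤ) * h⁻¹)| ≤ D :=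
        hqm _ _
      have e3 : φ ((h * g * h⁻¹) ^ (n : ℤ)) = n * φ (h * g * h⁻¹) := hhom _ _
      have e4 : φ (g ^ (n : ℤ)) = n * φ g := hhom _ _
      rw [hpow] at e3
      rw [← abs_of_nonneg (by positivity : (0:ℝ) ≤ (n:ℝ)), ← abs_mul]
      have : (n : ℝ) * (φ (h * g * h⁻¹) - φ g)
          = (φ (h * g ^ (n : ℤ) * h⁻¹) - φ (h * g ^ (n : ℤ)) - φ h⁻¹)
            + (φ (h * g ^ (n : ℤ)) - φ h - φ (g ^ (n : ℤ))) := by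
        rw [hinv h]
        push_cast at e3 e4 ⊢
        rw [e4] at *
        linarith [e3]
      rw [this]
      calc |_ + _| ≤ |φ (h * g ^ (n : ℤ) * h⁻¹) - φ (h * g ^ (n : ℤ)) - φ h⁻¹|
            + |φ (h * g ^ (n : ℤ)) - φ h - φ (g ^ (n : ℤ))| := abs_add_le _ _
        _ ≤ D + D := by
            refine add_le_add ?_ ?_
            · rw [show φ (h * g ^ (n : ℤ) * h⁻¹) - φ (h * g ^ (n : ℤ)) - φ h⁻¹
                = -(φ (h * g ^ (n : ℤ)) + φ h⁻¹ - φ (h * g ^ (n : ℤ) * h⁻¹)) by ring,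
                abs_neg]
              exact e2
            · rw [show φ (h * g ^ (n : ℤ)) - φ h - φ (g ^ (n : ℤ))
                = -(φ h + φ (g ^ (n : ℤ)) - φ (h * g ^ (n : ℤ))) by ring, abs_neg]
              exact e1
        _ = 2 * D := by ring
    linarith
  -- bound on a single commutator
  have hcomm : ∀ a b : G, |φ ⁅a, b⁆| ≤ D := by
    intro a b
    have h1 : φ (a * b * a⁻¹) = φ b := hconj b a
    have h2 := hqm (a * b * a⁻¹) b⁻¹
    rw [h1, hinv b] at h2
    have : ⁅a, b⁆ = a * b * a⁻¹ * b⁻¹ := commutatorElement_def a b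
    rw [← this] at h2
    simpa using h2
  -- bound on products of bounded elements
  have hprod : ∀ l : List G, l ≠ [] → (∀ x ∈ l, |φ x| ≤ D) →
      |φ l.prod| ≤ (2 * (l.length : ℝ) - 1) * D := by
    intro l
    induction l with
    | nil => intro h; exact absurd rfl h
    | cons x t ih =>
      intro _ hb
      match t with
      | [] =>
        have h := hb x (by simp)
        simp only [List.prod_cons, List.prod_nil, mul_one, List.length_singleton]
        push_cast
        linarith
      | y :: s =>
        have htne : (y :: s : List G) ≠ [] := by simp
        have ht := ih htne (fun z hz => hb z (List.mem_cons_of_mem _ hz))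
        have hx := hb x (List.mem_cons_self)
        have hq := hqm x (y :: s).prod
        have habs : ∀ u v : ℝ, |u - v| ≤ |u| + |v| := by
          intro u v
          calc |u - v| = |u + -v| := by rw [sub_eq_add_neg]
            _ ≤ |u| + |-v| := abs_add_le _ _
            _ = |u| + |v| := by rw [abs_neg]
        have this : |φ ((x :: y :: s).prod)| ≤ |φ x| + |φ ((y :: s).prod)| + D := by
          rw [List.prod_cons]
          calc |φ (x * (y :: s).prod)|
              = |(φ x + φ ((y :: s).prod)) - (φ x + φ ((y :: s).prod) - φ (x * (y :: s).prod))| := by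
                congr 1; ring
            _ ≤ |φ x + φ ((y :: s).prod)| + |φ x + φ ((y :: s).prod) - φ (x * (y :: s).prod)| :=
                habs _ _
            _ ≤ (|φ x| + |φ ((y :: s).prod)|) + D := add_le_add (abs_add_le _ _) hq
            _ = |φ x| + |φ ((y :: s).prod)| + D := by ring
        have hlen : ((x :: y :: s).length : ℝ) = ((y :: s).length : ℝ) + 1 := by
          simp
        calc |φ ((x :: y :: s).prod)| ≤ |φ x| + |φ ((y :: s).prod)| + D := this
          _ ≤ D + (2 * ((y :: s).length : ℝ) - 1) * D + D := by linarith
          _ = (2 * ((x :: y :: s).length : ℝ) - 1) * D := by rw [hlen]; ring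
  have part1 : ∀ (n : ℕ), 1 ≤ n → ∀ a b : Fin n → G,
      |φ (List.ofFn fun i => ⁅a i, b i⁆).prod| ≤ (2 * (n : ℝ) - 1) * D := by
    intro n hn a b
    have hlen : (List.ofFn fun i => ⁅a i, b i⁆).length = n := List.length_ofFn
    have hne : (List.ofFn fun i => ⁅a i, b i⁆) ≠ [] := by
      intro h
      rw [h] at hlen
      simp at hlen
      omega
    have := hprod (List.ofFn fun i => ⁅a i, b i⁆) hne (by
      intro x hx
      rw [List.mem_ofFn] at hx
      obtain ⟨i, rfl⟩ := hx
      exact hcomm _ _)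
    rwa [hlen] at this
  refine ⟨part1, ?_⟩
  intro g hg
  have hne := clSet_nonempty_of_mem_commutator g hg
  have hmem : cl g ∈ clSet g := Nat.sInf_mem hne
  rcases Nat.eq_zero_or_pos (cl g) with h0 | hpos
  · rw [h0] at hmem
    obtain ⟨a, b, hgeq⟩ := hmem
    have hg1 : g = 1 := by simp [hgeq]
    rw [h0]
    rw [hg1, hone]
    simp
  · obtain ⟨a, b, hgeq⟩ := hmem
    have := part1 (cl g) hpos a b
    rw [← hgeq] at this
    have h2 : (2 * (cl g : ℝ) - 1) * D ≤ 2 * (cl g : ℝ) * D := by nlinarith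
    linarith
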